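/- Let Ω ⊆ ℝ^n be open, δ > 0, and let (E_m) be a sequence of measurable sets, each strongly K-outward minimizing in Ω with constant δ and with Per_K(E_m,Ω) < ∞, such that χ_{E_m} → χ_E in L¹(ℝ^n) for some measurable set E with Per_K(E,Ω) < ∞. Then E is strongly K-outward minimizing in Ω with the same constant δ. -/

import Mathlib

open MeasureTheory Set Filter Metric Topology
open scoped ENNReal Pointwise

noncomputable section

abbrev Euc (n : ℕ) := EuclideanSpace ℝ (Fin n)

/-- Admissible kernel: measurable, nonnegative and even away from the origin,
with `∫ min(1,|x|) K(x) dx < ∞`. -/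
def KernelOK {n : ℕ} (K : Euc n → ℝ) : Prop :=
  Measurable K ∧ (∀ x : Euc n, x ≠ 0 → 0 ≤ K x) ∧ (∀ x : Euc n, x ≠ 0 → K (-x) = K x) ∧
    (∫⁻ x : Euc n, ENNReal.ofReal (min 1 ‖x‖ * K x)) < ⊤

/-- The `K`-perimeter of `E` in `Ω`. -/
def perK {n : ℕ} (K : Euc n → ℝ) (E Ω : Set (Euc n)) : ℝ≥0∞ :=
  (∫⁻ x in E, ∫⁻ y in Ω \ E, ENNReal.ofReal (K (x - y))) +
  (∫⁻ x in E ∩ Ω, ∫⁻ y in (Ω ∪ E)ᶜ, ENNReal.ofReal (K (x - y)))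

/-- The (total) `K`-perimeter of `E`. -/
def perKtot {n : ℕ} (K : Euc n → ℝ) (E : Set (Euc n)) : ℝ≥0∞ :=
  ∫⁻ x in E, ∫⁻ y in Eᶜ, ENNReal.ofReal (K (x - y))

/-- `A` is compactly contained in `Ω`. -/
def CptIn {n : ℕ} (A Ω : Set (Euc n)) : Prop :=
  IsCompact (closure A) ∧ closure A ⊆ Ω

/-- `E` is `K`-outward minimizing in `Ω`. -/
def OutMin {n : ℕ} (K : Euc n → ℝ) (E Ω : Set (Euc n)) : Prop :=
  ∀ F : Set (Euc n), MeasurableSet F → E ⊆ F → CptIn (F \ E) Ω →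
    perK K E Ω ≤ perK K F Ω

/-- `E` is strongly `K`-outward minimizing in `Ω` with constant `δ`. -/
def StrongOutMin {n : ℕ} (K : Euc n → ℝ) (δ : ℝ) (E Ω : Set (Euc n)) : Prop :=
  ∀ F : Set (Euc n), MeasurableSet F → E ⊆ F → CptIn (F \ E) Ω →
    perK K E Ω + ENNReal.ofReal δ * volume (F \ E) ≤ perK K F Ω

end
noncomputable section
open MeasureTheory Set Filter Metric Topology
open scoped ENNReal Pointwise

/-- The truncated `K`-curvature of `G` at `x`, with truncation parameter `ε`:
`∫_{ℝⁿ∖B(x,ε)} (χ_{Gᶜ}(y) − χ_G(y)) K(x−y) dy`. -/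
def truncCurv {n : ℕ} (K : Euc n → ℝ) (G : Set (Euc n)) (x : Euc n) (ε : ℝ) : ℝ :=
  ∫ y in (Metric.ball x ε)ᶜ,
    ((Gᶜ).indicator (fun _ => (1:ℝ)) y - G.indicator (fun _ => (1:ℝ)) y) * K (x - y)

/-- `G` has compact boundary of class `C^{1,1}`: the boundary is compact, and `G` is the
sublevel set of a `C^1` function with Lipschitz gradient which is nondegenerate on the
boundary. -/
def HasCptC11Boundary {n : ℕ} (G : Set (Euc n)) : Prop :=
  IsCompact (frontier G) ∧
  ∃ φ : Euc n → ℝ, ContDiff ℝ 1 φ ∧ (∃ L : NNReal, LipschitzWith L (fderiv ℝ φ)) ∧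
    G = {x | φ x ≤ 0} ∧ frontier G = {x | φ x = 0} ∧
    ∀ x ∈ frontier G, fderiv ℝ φ x ≠ 0

/-- `H^K_A(x) ≥ c` in the viscosity sense: every set `G` with compact `C^{1,1}` boundary
with `G ⊆ A` and `x ∈ ∂G` has `K`-curvature at least `c` at `x` (the curvature being the
limit of the truncated curvatures). -/
def ViscCurvGE {n : ℕ} (K : Euc n → ℝ) (A : Set (Euc n)) (x : Euc n) (c : ℝ) : Prop :=
  ∀ G : Set (Euc n), HasCptC11Boundary G → G ⊆ A → x ∈ frontier G →
    ∀ L : ℝ, Tendsto (truncCurv K G x) (𝓝[>] (0:ℝ)) (𝓝 L) → c ≤ L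

/-- Signed distance function from `E` (positive inside). -/
def sgnDist {n : ℕ} (E : Set (Euc n)) (x : Euc n) : ℝ :=
  Metric.infDist x Eᶜ - Metric.infDist x E

/-- The Almgren–Taylor–Wang energy `Per_K(G) − (1/h)∫_G d_E`. -/
def atwEnergy {n : ℕ} (K : Euc n → ℝ) (E : Set (Euc n)) (h : ℝ) (G : Set (Euc n)) : ℝ :=
  (perKtot K G).toReal - (1/h) * ∫ x in G, sgnDist E x

/-- `T` is an ATW minimizer for `E` at step `h`: it minimizes the ATW energy among all
measurable sets (competitors with infinite energy being irrelevant). -/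
def ATWMin {n : ℕ} (K : Euc n → ℝ) (E : Set (Euc n)) (h : ℝ) (T : Set (Euc n)) : Prop :=
  MeasurableSet T ∧ perKtot K T < ⊤ ∧ IntegrableOn (sgnDist E) T ∧
  ∀ G : Set (Euc n), MeasurableSet G → perKtot K G < ⊤ → IntegrableOn (sgnDist E) G →
    atwEnergy K E h T ≤ atwEnergy K E h G

/-- The set of Lebesgue density-one points of `T`. -/
def densityPts {n : ℕ} (T : Set (Euc n)) : Set (Euc n) :=
  {x | Tendsto (fun ρ : ℝ =>
      volume (T ∩ Metric.closedBall x ρ) / volume (Metric.closedBall x ρ))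
    (𝓝[>] (0:ℝ)) (𝓝 1)}

/-- The nonlocal functional `J_K(v) = ½∬ |v(x)−v(y)| K(x−y) dx dy`. -/
def JK {n : ℕ} (K : Euc n → ℝ) (v : Euc n → ℝ) : ℝ≥0∞ :=
  (1/2 : ℝ≥0∞) * ∫⁻ x : Euc n, ∫⁻ y : Euc n,
    ENNReal.ofReal |v x - v y| * ENNReal.ofReal (K (x - y))

end

open MeasureTheory Set Filter Metric Topology
open scoped ENNReal

namespace StabAux

variable {n : ℕ}

noncomputable def phiK (K : Euc n → ℝ) (A B : Set (Euc n)) : ℝ≥0∞ :=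
  ∫⁻ x in A, ∫⁻ y in B, ENNReal.ofReal (K (x - y))

lemma phiK_mono (K : Euc n → ℝ) {A A' B B' : Set (Euc n)} (hA : A ⊆ A') (hB : B ⊆ B') :
    phiK K A B ≤ phiK K A' B' := by
  refine lintegral_mono' (Measure.restrict_mono hA le_rfl) fun x => ?_
  exact lintegral_mono' (Measure.restrict_mono hB le_rfl) le_rfl

lemma meas_inner {K : Euc n → ℝ} (hK : Measurable K) (B : Set (Euc n)) :
    Measurable fun x : Euc n => ∫⁻ y in B, ENNReal.ofReal (K (x - y)) := by
  apply Measurable.lintegral_prod_right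
  exact (hK.comp (measurable_fst.sub measurable_snd)).ennreal_ofReal

lemma phiK_union_left (K : Euc n → ℝ) {A A' : Set (Euc n)} (B : Set (Euc n))
    (hA' : MeasurableSet A') (h : Disjoint A A') :
    phiK K (A ∪ A') B = phiK K A B + phiK K A' B :=
  lintegral_union hA' h

lemma phiK_union_right (K : Euc n → ℝ) (hK : Measurable K) (A : Set (Euc n))
    {B B' : Set (Euc n)} (hB' : MeasurableSet B') (h : Disjoint B B') :
    phiK K A (B ∪ B') = phiK K A B + phiK K A B' := by
  unfold phiK
  simp_rw [lintegral_union hB' h]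
  exact lintegral_add_left (meas_inner hK B) _

lemma phiK_symm {K : Euc n → ℝ} (hK : Measurable K)
    (hsym : ∀ x : Euc n, x ≠ 0 → K (-x) = K x)
    {A B : Set (Euc n)} (hA : MeasurableSet A) (hB : MeasurableSet B) :
    phiK K A B = phiK K B A := by
  have hkey : ∀ x y : Euc n, ENNReal.ofReal (K (x - y)) = ENNReal.ofReal (K (y - x)) := by
    intro x y
    rcases eq_or_ne x y with rfl | hxy
    · rfl
    · have := hsym (y - x) (sub_ne_zero.2 (Ne.symm hxy))
      rw [neg_sub] at this
      rw [this]
  unfold phiK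
  rw [lintegral_lintegral_swap]
  · refine lintegral_congr fun y => lintegral_congr fun x => ?_
    exact hkey x y
  · exact ((hK.comp (measurable_fst.sub measurable_snd)).ennreal_ofReal).aemeasurable

noncomputable def QK (K : Euc n → ℝ) (Ω A B : Set (Euc n)) : ℝ≥0∞ :=
  phiK K A (B ∩ Ω) + phiK K (A ∩ Ω) (B ∩ Ωᶜ)

lemma QK_mono (K : Euc n → ℝ) (Ω : Set (Euc n)) {A A' B B' : Set (Euc n)}
    (hA : A ⊆ A') (hB : B ⊆ B') : QK K Ω A B ≤ QK K Ω A' B' :=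
  add_le_add (phiK_mono K hA (inter_subset_inter_left _ hB))
    (phiK_mono K (inter_subset_inter_left _ hA) (inter_subset_inter_left _ hB))

lemma QK_union_left (K : Euc n → ℝ) (Ω : Set (Euc n)) {A A' : Set (Euc n)} (B : Set (Euc n))
    (hA' : MeasurableSet A') (hΩ : MeasurableSet Ω) (h : Disjoint A A') :
    QK K Ω (A ∪ A') B = QK K Ω A B + QK K Ω A' B := by
  unfold QK
  rw [union_inter_distrib_right,
    phiK_union_left K _ (hA'.inter hΩ) (h.mono inter_subset_left inter_subset_left),
    phiK_union_left K _ hA' h]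
  ring

lemma QK_union_right (K : Euc n → ℝ) (hK : Measurable K) (Ω : Set (Euc n)) (A : Set (Euc n))
    {B B' : Set (Euc n)} (hB' : MeasurableSet B') (hΩ : MeasurableSet Ω) (h : Disjoint B B') :
    QK K Ω A (B ∪ B') = QK K Ω A B + QK K Ω A B' := by
  unfold QK
  rw [union_inter_distrib_right, union_inter_distrib_right,
    phiK_union_right K hK _ (hB'.inter hΩ) (h.mono inter_subset_left inter_subset_left),
    phiK_union_right K hK _ (hB'.inter hΩ.compl) (h.mono inter_subset_left inter_subset_left)]
  ring

lemma QK_eq (K : Euc n → ℝ) (Ω : Set (Euc n)) (hΩ : MeasurableSet Ω) {A : Set (Euc n)}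
    (hA : MeasurableSet A) (B : Set (Euc n)) :
    QK K Ω A B = phiK K (A ∩ Ω) (B ∩ Ω) + phiK K (A ∩ Ωᶜ) (B ∩ Ω) + phiK K (A ∩ Ω) (B ∩ Ωᶜ) := by
  have hd : Disjoint (A ∩ Ω) (A ∩ Ωᶜ) :=
    Disjoint.mono inter_subset_right inter_subset_right disjoint_compl_right
  have h1 : phiK K A (B ∩ Ω) = phiK K (A ∩ Ω) (B ∩ Ω) + phiK K (A ∩ Ωᶜ) (B ∩ Ω) := by
    rw [← phiK_union_left K _ (hA.inter hΩ.compl) hd, Set.inter_union_compl]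
  unfold QK
  rw [h1]

lemma QK_symm (K : Euc n → ℝ) (hK : Measurable K)
    (hsym : ∀ x : Euc n, x ≠ 0 → K (-x) = K x) (Ω : Set (Euc n)) (hΩ : MeasurableSet Ω)
    {A B : Set (Euc n)} (hA : MeasurableSet A) (hB : MeasurableSet B) :
    QK K Ω A B = QK K Ω B A := by
  rw [QK_eq K Ω hΩ hA B, QK_eq K Ω hΩ hB A,
    phiK_symm hK hsym (hA.inter hΩ) (hB.inter hΩ),
    phiK_symm hK hsym (hA.inter hΩ.compl) (hB.inter hΩ),
    phiK_symm hK hsym (hA.inter hΩ) (hB.inter hΩ.compl)]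
  ring

lemma perK_eq_QK (K : Euc n → ℝ) (Ω E : Set (Euc n)) :
    perK K E Ω = QK K Ω E Eᶜ := by
  unfold perK QK phiK
  rw [show Ω \ E = Eᶜ ∩ Ω from by rw [Set.diff_eq_compl_inter],
    show (Ω ∪ E)ᶜ = Eᶜ ∩ Ωᶜ from by rw [Set.compl_union, Set.inter_comm]]

lemma perK_disjoint_identity (K : Euc n → ℝ) (hK : Measurable K)
    (hsym : ∀ x : Euc n, x ≠ 0 → K (-x) = K x) (Ω : Set (Euc n)) (hΩ : MeasurableSet Ω)
    {A B : Set (Euc n)} (hA : MeasurableSet A) (hB : MeasurableSet B) (hd : Disjoint A B) :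
    perK K (A ∪ B) Ω + (QK K Ω A B + QK K Ω B A) = perK K A Ω + perK K B Ω := by
  have hC : MeasurableSet (A ∪ B)ᶜ := (hA.union hB).compl
  have hAc : Aᶜ = (A ∪ B)ᶜ ∪ B := by
    rw [Set.compl_union]
    ext x
    simp only [Set.mem_union, Set.mem_inter_iff, Set.mem_compl_iff]
    have := Set.disjoint_left.1 hd
    tauto
  have hBc : Bᶜ = (A ∪ B)ᶜ ∪ A := by
    rw [Set.compl_union]
    ext x
    simp only [Set.mem_union, Set.mem_inter_iff, Set.mem_compl_iff]
    have := Set.disjoint_left.1 hd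
    tauto
  have hdACB : Disjoint ((A ∪ B)ᶜ) B := by
    rw [Set.compl_union]
    exact Disjoint.mono_left inter_subset_right disjoint_compl_left
  have hdACA : Disjoint ((A ∪ B)ᶜ) A := by
    rw [Set.compl_union]
    exact Disjoint.mono_left inter_subset_left disjoint_compl_left
  rw [perK_eq_QK K Ω (A ∪ B), perK_eq_QK K Ω A, perK_eq_QK K Ω B,
    QK_union_left K Ω _ hB hΩ hd, hAc, hBc,
    QK_union_right K hK Ω A hB hΩ hdACB,
    QK_union_right K hK Ω B hA hΩ hdACA]
  ring

noncomputable def GQ (K : Euc n → ℝ) (Ω B : Set (Euc n)) (x : Euc n) : ℝ≥0∞ :=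
  (∫⁻ y in B ∩ Ω, ENNReal.ofReal (K (x - y))) +
    Ω.indicator (fun x' => ∫⁻ y in B ∩ Ωᶜ, ENNReal.ofReal (K (x' - y))) x

lemma QK_eq_setLintegral (K : Euc n → ℝ) (hK : Measurable K) (Ω : Set (Euc n))
    (hΩ : MeasurableSet Ω) (A B : Set (Euc n)) :
    QK K Ω A B = ∫⁻ x in A, GQ K Ω B x := by
  unfold QK GQ phiK
  rw [lintegral_add_left (meas_inner hK (B ∩ Ω))]
  congr 1
  rw [lintegral_indicator hΩ, Measure.restrict_restrict hΩ, Set.inter_comm]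

end StabAux


open StabAux in
set_option maxHeartbeats 2000000 in
/-- stability of strong `K`-outward minimality under `L¹` convergence. -/
theorem strongOutMin_L1_stable {n : ℕ} (K : Euc n → ℝ) (hK : KernelOK K)
    (Ω : Set (Euc n)) (δ : ℝ) (hδ : 0 < δ) (hΩ : IsOpen Ω)
    (E : ℕ → Set (Euc n)) (E₀ : Set (Euc n))
    (hEm : ∀ m, MeasurableSet (E m)) (hE₀ : MeasurableSet E₀)
    (hmin : ∀ m, StrongOutMin K δ (E m) Ω) (hfin : ∀ m, perK K (E m) Ω < ⊤)
    (hfin₀ : perK K E₀ Ω < ⊤)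
    (hconv : Tendsto (fun m => volume ((E m \ E₀) ∪ (E₀ \ E m))) atTop (𝓝 0)) :
    StrongOutMin K δ E₀ Ω := by
  obtain ⟨hKm, -, hKsym, -⟩ := hK
  intro F hF hEF hcpt
  classical
  have hΩm : MeasurableSet Ω := hΩ.measurableSet
  set W : Set (Euc n) := F \ E₀ with hWdef
  have hWm : MeasurableSet W := hF.diff hE₀
  have hdisj : Disjoint E₀ W := disjoint_sdiff_right
  have hFW : E₀ ∪ W = F := union_diff_cancel hEF
  have hWsub : W ⊆ E₀ᶜ := fun x hx => hx.2
  have hQfin : QK K Ω E₀ W ≠ ⊤ := by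
    refine ne_of_lt (lt_of_le_of_lt ?_ hfin₀)
    rw [perK_eq_QK]
    exact QK_mono K Ω Subset.rfl hWsub
  set η : ℕ → ℝ≥0∞ := fun m => volume ((E m \ E₀) ∪ (E₀ \ E m)) with hηdef
  set ε₁ : ℕ → ℝ≥0∞ := fun m => QK K Ω (E₀ \ E m) W with hε₁def
  set ε₂ : ℕ → ℝ≥0∞ := fun m => QK K Ω E₀ (W ∩ E m) with hε₂def
  -- the per-m inequality
  have key : ∀ m, ENNReal.ofReal δ * volume W + (QK K Ω E₀ W + QK K Ω E₀ W)
      ≤ perK K W Ω + (ENNReal.ofReal δ * η m + (ε₁ m + ε₂ m + (ε₁ m + ε₂ m))) := by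
    intro m
    set A := E m with hAdef
    have hAm : MeasurableSet A := hEm m
    set W' : Set (Euc n) := W \ A with hW'def
    have hW'm : MeasurableSet W' := hWm.diff hAm
    have hdAW' : Disjoint A W' := disjoint_sdiff_right
    have hG : (A ∪ W') \ A = W' := by
      rw [union_diff_left, hW'def, diff_diff, union_self]
    have hmin' : perK K A Ω + ENNReal.ofReal δ * volume W' ≤ perK K (A ∪ W') Ω := by
      have hcpt' : CptIn ((A ∪ W') \ A) Ω := by
        rw [hG]
        exact ⟨hcpt.1.of_isClosed_subset isClosed_closure (closure_mono diff_subset),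
          (closure_mono diff_subset).trans hcpt.2⟩
      have := hmin m (A ∪ W') (hAm.union hW'm) subset_union_left hcpt'
      rwa [hG] at this
    have hid : perK K (A ∪ W') Ω + (QK K Ω A W' + QK K Ω W' A)
        = perK K A Ω + perK K W' Ω :=
      perK_disjoint_identity K hKm hKsym Ω hΩm hAm hW'm hdAW'
    have step1 : ENNReal.ofReal δ * volume W' + (QK K Ω A W' + QK K Ω W' A)
        ≤ perK K W' Ω := by
      have h2 : perK K A Ω + (ENNReal.ofReal δ * volume W' + (QK K Ω A W' + QK K Ω W' A))
          ≤ perK K A Ω + perK K W' Ω := by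
        calc perK K A Ω + (ENNReal.ofReal δ * volume W' + (QK K Ω A W' + QK K Ω W' A))
            = (perK K A Ω + ENNReal.ofReal δ * volume W') + (QK K Ω A W' + QK K Ω W' A) := by
              ring
          _ ≤ perK K (A ∪ W') Ω + (QK K Ω A W' + QK K Ω W' A) := add_le_add_left hmin' _
          _ = perK K A Ω + perK K W' Ω := hid
      exact (ENNReal.add_le_add_iff_left (hfin m).ne).1 h2
    have hW'c : W'ᶜ = Wᶜ ∪ (W ∩ A) := by
      rw [hW'def]; ext x; simp only [mem_compl_iff, mem_diff, mem_union, mem_inter_iff]; tauto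
    have hdisj2 : Disjoint (Wᶜ) (W ∩ A) :=
      Disjoint.mono_right inter_subset_left disjoint_compl_left
    have hperW' : perK K W' Ω = QK K Ω W' Wᶜ + QK K Ω W' (W ∩ A) := by
      rw [perK_eq_QK, hW'c, QK_union_right K hKm Ω W' (hWm.inter hAm) hΩm hdisj2]
    have hAsplit : A = (A \ W) ∪ (A ∩ W) := by
      ext x; simp only [mem_union, mem_diff, mem_inter_iff]; tauto
    have hdisj3 : Disjoint (A \ W) (A ∩ W) :=
      Set.disjoint_left.2 fun x hx hx2 => hx.2 hx2.2
    have hQA : QK K Ω A W' = QK K Ω (A \ W) W' + QK K Ω (A ∩ W) W' := by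
      conv_lhs => rw [hAsplit]
      exact QK_union_left K Ω W' (hAm.inter hWm) hΩm hdisj3
    have hQA' : QK K Ω W' A = QK K Ω W' (A \ W) + QK K Ω W' (A ∩ W) := by
      conv_lhs => rw [hAsplit]
      exact QK_union_right K hKm Ω W' (hAm.inter hWm) hΩm hdisj3
    have hsymAW : QK K Ω (A ∩ W) W' = QK K Ω W' (W ∩ A) := by
      rw [Set.inter_comm A W]
      exact QK_symm K hKm hKsym Ω hΩm (hWm.inter hAm) hW'm
    have hsymAW2 : QK K Ω W' (A ∩ W) = QK K Ω W' (W ∩ A) := by rw [Set.inter_comm A W]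
    have hfinWA : QK K Ω W' (W ∩ A) ≠ ⊤ := by
      refine ne_of_lt (lt_of_le_of_lt ?_ (hfin m))
      calc QK K Ω W' (W ∩ A) ≤ QK K Ω Aᶜ A :=
            QK_mono K Ω (fun x hx => hx.2) inter_subset_right
        _ = QK K Ω A Aᶜ := QK_symm K hKm hKsym Ω hΩm hAm.compl hAm
        _ = perK K A Ω := (perK_eq_QK K Ω A).symm
    have step2 : ENNReal.ofReal δ * volume W' + (QK K Ω (A \ W) W' + QK K Ω W' (A \ W))
        ≤ perK K W Ω := by
      have hexp : ENNReal.ofReal δ * volume W' + (QK K Ω A W' + QK K Ω W' A)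
          = ((ENNReal.ofReal δ * volume W' + (QK K Ω (A \ W) W' + QK K Ω W' (A \ W)))
              + QK K Ω W' (W ∩ A)) + QK K Ω W' (W ∩ A) := by
        rw [hQA, hQA', hsymAW, hsymAW2]; ring
      have h3 : ((ENNReal.ofReal δ * volume W' + (QK K Ω (A \ W) W' + QK K Ω W' (A \ W)))
              + QK K Ω W' (W ∩ A)) + QK K Ω W' (W ∩ A)
          ≤ QK K Ω W' Wᶜ + QK K Ω W' (W ∩ A) := by
        rw [← hexp, ← hperW']; exact step1
      have h4 := (ENNReal.add_le_add_iff_right hfinWA).1 h3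
      calc ENNReal.ofReal δ * volume W' + (QK K Ω (A \ W) W' + QK K Ω W' (A \ W))
          ≤ (ENNReal.ofReal δ * volume W' + (QK K Ω (A \ W) W' + QK K Ω W' (A \ W)))
              + QK K Ω W' (W ∩ A) := le_self_add
        _ ≤ QK K Ω W' Wᶜ := h4
        _ ≤ QK K Ω W Wᶜ := QK_mono K Ω diff_subset Subset.rfl
        _ = perK K W Ω := (perK_eq_QK K Ω W).symm
    have hsubE : A ∩ E₀ ⊆ A \ W :=
      fun x hx => ⟨hx.1, fun hw => Set.disjoint_left.1 hdisj hx.2 hw⟩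
    have low1 : QK K Ω (A ∩ E₀) W' ≤ QK K Ω (A \ W) W' := QK_mono K Ω hsubE Subset.rfl
    have low2 : QK K Ω (A ∩ E₀) W' ≤ QK K Ω W' (A \ W) := by
      rw [QK_symm K hKm hKsym Ω hΩm (hAm.inter hE₀) hW'm]
      exact QK_mono K Ω Subset.rfl hsubE
    have hE₀split : E₀ = (A ∩ E₀) ∪ (E₀ \ A) := by
      ext x; simp only [mem_union, mem_diff, mem_inter_iff]; tauto
    have hdisj4 : Disjoint (A ∩ E₀) (E₀ \ A) :=
      Set.disjoint_left.2 fun x hx hx2 => hx2.2 hx.1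
    have hWsplit : W = W' ∪ (W ∩ A) := by
      rw [hW'def]; ext x; simp only [mem_union, mem_diff, mem_inter_iff]; tauto
    have hdisj5 : Disjoint W' (W ∩ A) :=
      Disjoint.mono_right inter_subset_right disjoint_sdiff_left
    have hQE₀W : QK K Ω E₀ W ≤ QK K Ω (A ∩ E₀) W' + (ε₂ m + ε₁ m) := by
      calc QK K Ω E₀ W = QK K Ω (A ∩ E₀) W + QK K Ω (E₀ \ A) W := by
            conv_lhs => rw [hE₀split]
            exact QK_union_left K Ω W (hE₀.diff hAm) hΩm hdisj4
        _ = (QK K Ω (A ∩ E₀) W' + QK K Ω (A ∩ E₀) (W ∩ A)) + QK K Ω (E₀ \ A) W := by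
            congr 1
            conv_lhs => rw [hWsplit]
            exact QK_union_right K hKm Ω (A ∩ E₀) (hWm.inter hAm) hΩm hdisj5
        _ ≤ (QK K Ω (A ∩ E₀) W' + QK K Ω E₀ (W ∩ A)) + QK K Ω (E₀ \ A) W := by
            gcongr
            exact QK_mono K Ω inter_subset_right Subset.rfl
        _ = QK K Ω (A ∩ E₀) W' + (ε₂ m + ε₁ m) := by rw [hε₂def, hε₁def]; ring
    have hvol : volume W ≤ volume W' + η m := by
      calc volume W = volume (W' ∪ (W ∩ A)) := by rw [← hWsplit]
        _ ≤ volume W' + volume (W ∩ A) := measure_union_le _ _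
        _ ≤ volume W' + η m := by
            gcongr
            refine measure_mono (fun x hx => ?_)
            exact Or.inl ⟨hx.2, hx.1.2⟩
    calc ENNReal.ofReal δ * volume W + (QK K Ω E₀ W + QK K Ω E₀ W)
        ≤ ENNReal.ofReal δ * (volume W' + η m)
            + ((QK K Ω (A ∩ E₀) W' + (ε₂ m + ε₁ m))
              + (QK K Ω (A ∩ E₀) W' + (ε₂ m + ε₁ m))) := by
          exact add_le_add (mul_le_mul_right hvol _) (add_le_add hQE₀W hQE₀W)
      _ = (ENNReal.ofReal δ * volume W' + (QK K Ω (A ∩ E₀) W' + QK K Ω (A ∩ E₀) W'))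
            + (ENNReal.ofReal δ * η m + (ε₁ m + ε₂ m + (ε₁ m + ε₂ m))) := by ring
      _ ≤ (ENNReal.ofReal δ * volume W' + (QK K Ω (A \ W) W' + QK K Ω W' (A \ W)))
            + (ENNReal.ofReal δ * η m + (ε₁ m + ε₂ m + (ε₁ m + ε₂ m))) := by
          exact add_le_add_left (add_le_add_right (add_le_add low1 low2) _) _
      _ ≤ perK K W Ω + (ENNReal.ofReal δ * η m + (ε₁ m + ε₂ m + (ε₁ m + ε₂ m))) :=
          add_le_add_left step2 _
  -- limits of the error terms
  have hε₁0 : Tendsto ε₁ atTop (𝓝 0) := by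
    have hGint : (∫⁻ x, GQ K Ω W x ∂(volume.restrict E₀)) ≠ ⊤ := by
      rw [← QK_eq_setLintegral K hKm Ω hΩm E₀ W]
      exact hQfin
    have hμs : Tendsto (fun m => (volume.restrict E₀) (E₀ \ E m)) atTop (𝓝 0) := by
      refine tendsto_of_tendsto_of_tendsto_of_le_of_le' tendsto_const_nhds hconv
        (Eventually.of_forall fun m => zero_le) (Eventually.of_forall fun m => ?_)
      rw [Measure.restrict_apply (hE₀.diff (hEm m)),
        Set.inter_eq_self_of_subset_left diff_subset]
      exact measure_mono subset_union_right
    have h := tendsto_setLIntegral_zero hGint hμs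
    refine h.congr fun m => ?_
    rw [Measure.restrict_restrict (hE₀.diff (hEm m)),
      Set.inter_eq_self_of_subset_left diff_subset,
      ← QK_eq_setLintegral K hKm Ω hΩm (E₀ \ E m) W]
  have hε₂0 : Tendsto ε₂ atTop (𝓝 0) := by
    have hGint : (∫⁻ x, GQ K Ω E₀ x ∂(volume.restrict W)) ≠ ⊤ := by
      rw [← QK_eq_setLintegral K hKm Ω hΩm W E₀,
        QK_symm K hKm hKsym Ω hΩm hWm hE₀]
      exact hQfin
    have hμs : Tendsto (fun m => (volume.restrict W) (W ∩ E m)) atTop (𝓝 0) := by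
      refine tendsto_of_tendsto_of_tendsto_of_le_of_le' tendsto_const_nhds hconv
        (Eventually.of_forall fun m => zero_le) (Eventually.of_forall fun m => ?_)
      rw [Measure.restrict_apply (hWm.inter (hEm m)),
        Set.inter_eq_self_of_subset_left inter_subset_left]
      refine (measure_mono (fun x hx => ?_)).trans (measure_mono subset_union_left)
      exact ⟨hx.2, hx.1.2⟩
    have h := tendsto_setLIntegral_zero hGint hμs
    refine h.congr fun m => ?_
    rw [Measure.restrict_restrict (hWm.inter (hEm m)),
      Set.inter_eq_self_of_subset_left inter_subset_left,
      ← QK_eq_setLintegral K hKm Ω hΩm (W ∩ E m) E₀]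
    exact QK_symm K hKm hKsym Ω hΩm (hWm.inter (hEm m)) hE₀
  have hc0 : Tendsto (fun m => ENNReal.ofReal δ * η m + (ε₁ m + ε₂ m + (ε₁ m + ε₂ m)))
      atTop (𝓝 0) := by
    have h1 : Tendsto (fun m => ENNReal.ofReal δ * η m) atTop (𝓝 0) := by
      have h : Tendsto (fun m => ENNReal.ofReal δ * η m) atTop (𝓝 (ENNReal.ofReal δ * 0)) :=
        ENNReal.Tendsto.const_mul hconv (Or.inr ENNReal.ofReal_ne_top)
      simpa using h
    have h2 := (hε₁0.add hε₂0).add (hε₁0.add hε₂0)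
    have h3 := h1.add h2
    simpa using h3
  have main : ENNReal.ofReal δ * volume W + (QK K Ω E₀ W + QK K Ω E₀ W) ≤ perK K W Ω := by
    have hlim : Tendsto
        (fun m => perK K W Ω + (ENNReal.ofReal δ * η m + (ε₁ m + ε₂ m + (ε₁ m + ε₂ m))))
        atTop (𝓝 (perK K W Ω)) := by
      have := (tendsto_const_nhds :
        Tendsto (fun _ : ℕ => perK K W Ω) atTop (𝓝 (perK K W Ω))).add hc0
      simpa using this
    exact ge_of_tendsto hlim (Eventually.of_forall key)
  have hidF : perK K F Ω + (QK K Ω E₀ W + QK K Ω W E₀) = perK K E₀ Ω + perK K W Ω := by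
    conv_lhs => rw [← hFW]
    exact perK_disjoint_identity K hKm hKsym Ω hΩm hE₀ hWm hdisj
  have hsymEW : QK K Ω W E₀ = QK K Ω E₀ W := QK_symm K hKm hKsym Ω hΩm hWm hE₀
  have final : (perK K E₀ Ω + ENNReal.ofReal δ * volume W) + (QK K Ω E₀ W + QK K Ω E₀ W)
      ≤ perK K F Ω + (QK K Ω E₀ W + QK K Ω E₀ W) := by
    calc (perK K E₀ Ω + ENNReal.ofReal δ * volume W) + (QK K Ω E₀ W + QK K Ω E₀ W)
        = perK K E₀ Ω + (ENNReal.ofReal δ * volume W + (QK K Ω E₀ W + QK K Ω E₀ W)) := by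
          ring
      _ ≤ perK K E₀ Ω + perK K W Ω := add_le_add_right main _
      _ = perK K F Ω + (QK K Ω E₀ W + QK K Ω W E₀) := hidF.symm
      _ = perK K F Ω + (QK K Ω E₀ W + QK K Ω E₀ W) := by rw [hsymEW]
  exact (ENNReal.add_le_add_iff_right (ENNReal.add_ne_top.2 ⟨hQfin, hQfin⟩)).1 final
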